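/- The central element t − 1 of B is a non-zero-divisor: for every b ∈ B, if (t−1)·b = 0 then b = 0. -/

import Mathlib

open LaurentPolynomial FreeAlgebra

noncomputable section

/-- Generators `e`, `f`, `h`. -/
inductive Bgen | e | f | h

variable (k : Type*) [Field k] [CharZero k]

/-- The free algebra over the Laurent polynomial ring `k[t,t⁻¹]` on `e, f, h`. -/
abbrev FB := FreeAlgebra (LaurentPolynomial k) Bgen

/-- The defining relations of `B`:
`ef − fe = (t−1)h`, `he − eh = 2(t−1)e`, `hf − fh = −2(t−1)f`. -/
inductive Brel : FB k → FB k → Prop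
  | ef : Brel (ι _ .e * ι _ .f - ι _ .f * ι _ .e)
      (algebraMap (LaurentPolynomial k) (FB k) (T 1 - 1) * ι _ .h)
  | he : Brel (ι _ .h * ι _ .e - ι _ .e * ι _ .h)
      (algebraMap (LaurentPolynomial k) (FB k) (2 * (T 1 - 1)) * ι _ .e)
  | hf : Brel (ι _ .h * ι _ .f - ι _ .f * ι _ .h)
      (-(algebraMap (LaurentPolynomial k) (FB k) (2 * (T 1 - 1))) * ι _ .f)

/-- `B`, the `k[t,t⁻¹]`-algebra generated by `e, f, h` subject to the relations
`ef − fe = (t−1)h`, `he − eh = 2(t−1)e`, `hf − fh = −2(t−1)f` (the quotient of the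
free algebra by the two-sided ideal generated by the relations). -/
abbrev B := RingQuot (Brel k)

/-- The generator `e` of `B`. -/
def Be : B k := RingQuot.mkAlgHom (LaurentPolynomial k) _ (ι _ .e)
/-- The generator `f` of `B`. -/
def Bf : B k := RingQuot.mkAlgHom (LaurentPolynomial k) _ (ι _ .f)
/-- The generator `h` of `B`. -/
def Bh : B k := RingQuot.mkAlgHom (LaurentPolynomial k) _ (ι _ .h)
/-- The image of `t` in `B`. -/
def Bt : B k := algebraMap (LaurentPolynomial k) (B k) (T 1)

set_option linter.unusedSectionVars false

abbrev PA := MvPolynomial (Fin 3) (LaurentPolynomial k)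

def cT : LaurentPolynomial k := T 1 - 1

def phiP : PA k →ₐ[LaurentPolynomial k] PA k :=
  MvPolynomial.aeval ![MvPolynomial.X 0, MvPolynomial.X 1 - MvPolynomial.C (2 * cT k), MvPolynomial.X 2]

def Dp : PA k →ₗ[LaurentPolynomial k] PA k := (MvPolynomial.pderiv 0).toLinearMap

lemma Dp_mul (p q : PA k) : Dp k (p * q) = p * Dp k q + q * Dp k p := by
  simpa [Dp, smul_eq_mul] using (MvPolynomial.pderiv (0 : Fin 3)).leibniz p q

@[simp] lemma Dp_X0 : Dp k (MvPolynomial.X 0 : PA k) = 1 := MvPolynomial.pderiv_X_self 0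
@[simp] lemma Dp_X1 : Dp k (MvPolynomial.X 1 : PA k) = 0 := MvPolynomial.pderiv_X_of_ne (by decide)
@[simp] lemma Dp_X2 : Dp k (MvPolynomial.X 2 : PA k) = 0 := MvPolynomial.pderiv_X_of_ne (by decide)
@[simp] lemma Dp_C (r : LaurentPolynomial k) : Dp k (MvPolynomial.C r) = 0 := by simp [Dp]
@[simp] lemma Dp_one : Dp k (1 : PA k) = 0 := by simpa using Dp_C k 1

@[simp] lemma Dp_mul_X0 (p : PA k) : Dp k (MvPolynomial.X 0 * p) = p + MvPolynomial.X 0 * Dp k p := by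
  rw [Dp_mul]; simp; ring
@[simp] lemma Dp_mul_X1 (p : PA k) : Dp k (MvPolynomial.X 1 * p) = MvPolynomial.X 1 * Dp k p := by
  rw [Dp_mul]; simp
@[simp] lemma Dp_mul_X2 (p : PA k) : Dp k (MvPolynomial.X 2 * p) = MvPolynomial.X 2 * Dp k p := by
  rw [Dp_mul]; simp

@[simp] lemma phiP_X0 : phiP k (MvPolynomial.X 0) = MvPolynomial.X 0 := by simp [phiP]
@[simp] lemma phiP_X1 : phiP k (MvPolynomial.X 1) = MvPolynomial.X 1 - MvPolynomial.C (2 * cT k) := by simp [phiP]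
@[simp] lemma phiP_X2 : phiP k (MvPolynomial.X 2) = MvPolynomial.X 2 := by simp [phiP]

@[simp] lemma phiP_C (r : LaurentPolynomial k) : phiP k (MvPolynomial.C r) = MvPolynomial.C r := by
  simp [phiP]

lemma Dp_phiP (p : PA k) : Dp k (phiP k p) = phiP k (Dp k p) := by
  induction p using MvPolynomial.induction_on with
  | C r => simp [phiP]
  | add p q hp hq => simp [map_add, hp, hq]
  | mul_X p i hp =>
      have hX : Dp k (phiP k (MvPolynomial.X i)) = phiP k (Dp k (MvPolynomial.X i)) := by
        fin_cases i <;> simp [Dp_mul]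
      rw [map_mul, Dp_mul, hp, hX, Dp_mul, map_add, map_mul, map_mul]

def opF : Module.End (LaurentPolynomial k) (PA k) :=
  LinearMap.mulLeft (LaurentPolynomial k) (MvPolynomial.X 0)

def opH : Module.End (LaurentPolynomial k) (PA k) :=
  LinearMap.mulLeft (LaurentPolynomial k) (MvPolynomial.X 1)
  - (2 * cT k) • (LinearMap.mulLeft (LaurentPolynomial k) (MvPolynomial.X 0) ∘ₗ Dp k)

def opE : Module.End (LaurentPolynomial k) (PA k) :=
  LinearMap.mulLeft (LaurentPolynomial k) (MvPolynomial.X 2) ∘ₗ (phiP k).toLinearMap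
  + cT k • (LinearMap.mulLeft (LaurentPolynomial k) (MvPolynomial.X 1) ∘ₗ Dp k)
  - (cT k * cT k) • (LinearMap.mulLeft (LaurentPolynomial k) (MvPolynomial.X 0) ∘ₗ Dp k ∘ₗ Dp k)

lemma opF_apply (p : PA k) : opF k p = MvPolynomial.X 0 * p := rfl

lemma opH_apply (p : PA k) :
    opH k p = MvPolynomial.X 1 * p - (2 * cT k) • (MvPolynomial.X 0 * Dp k p) := rfl

lemma opE_apply (p : PA k) :
    opE k p = MvPolynomial.X 2 * phiP k p + cT k • (MvPolynomial.X 1 * Dp k p)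
      - (cT k * cT k) • (MvPolynomial.X 0 * Dp k (Dp k p)) := rfl

lemma rel_EF : opE k * opF k - opF k * opE k
    = algebraMap (LaurentPolynomial k) (Module.End (LaurentPolynomial k) (PA k)) (cT k) * opH k := by
  refine LinearMap.ext fun p => ?_
  simp only [LinearMap.sub_apply, LinearMap.neg_apply, Module.End.mul_apply,
    Module.algebraMap_end_apply, opE_apply, opF_apply, opH_apply, map_add, map_sub,
    map_smul, map_mul, phiP_X0, phiP_X1, phiP_X2, phiP_C,
    Dp_mul_X0, Dp_mul_X1, Dp_mul_X2, Dp_phiP, Dp_C, mul_zero, smul_zero, smul_smul]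
  simp only [smul_add, smul_sub, MvPolynomial.smul_eq_C_mul, MvPolynomial.C_mul, map_ofNat]
  ring

lemma rel_HE : opH k * opE k - opE k * opH k
    = algebraMap (LaurentPolynomial k) (Module.End (LaurentPolynomial k) (PA k)) (2 * cT k) * opE k := by
  refine LinearMap.ext fun p => ?_
  simp only [LinearMap.sub_apply, LinearMap.neg_apply, Module.End.mul_apply,
    Module.algebraMap_end_apply, opE_apply, opF_apply, opH_apply, map_add, map_sub,
    map_smul, map_mul, phiP_X0, phiP_X1, phiP_X2, phiP_C,
    Dp_mul_X0, Dp_mul_X1, Dp_mul_X2, Dp_phiP, Dp_C, mul_zero, smul_zero, smul_smul]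
  simp only [smul_add, smul_sub, MvPolynomial.smul_eq_C_mul, MvPolynomial.C_mul, map_ofNat]
  ring

lemma rel_HF : opH k * opF k - opF k * opH k
    = -(algebraMap (LaurentPolynomial k) (Module.End (LaurentPolynomial k) (PA k)) (2 * cT k)) * opF k := by
  refine LinearMap.ext fun p => ?_
  simp only [LinearMap.sub_apply, LinearMap.neg_apply, Module.End.mul_apply,
    Module.algebraMap_end_apply, opE_apply, opF_apply, opH_apply, map_add, map_sub,
    map_smul, map_mul, phiP_X0, phiP_X1, phiP_X2, phiP_C,
    Dp_mul_X0, Dp_mul_X1, Dp_mul_X2, Dp_phiP, Dp_C, mul_zero, smul_zero, smul_smul]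
  simp only [smul_add, smul_sub, MvPolynomial.smul_eq_C_mul, MvPolynomial.C_mul, map_ofNat]
  ring

/- === the representation === -/

def gOp : Bgen → Module.End (LaurentPolynomial k) (PA k)
  | .e => opE k
  | .f => opF k
  | .h => opH k

def liftF : FB k →ₐ[LaurentPolynomial k] Module.End (LaurentPolynomial k) (PA k) :=
  FreeAlgebra.lift _ (gOp k)

lemma liftF_rel : ∀ ⦃x y : FB k⦄, Brel k x y → liftF k x = liftF k y := by
  intro x y h
  cases h with
  | ef =>
      simp only [liftF, map_sub, map_mul, FreeAlgebra.lift_ι_apply, AlgHom.commutes, gOp]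
      simpa only [cT, map_sub, map_mul, map_one] using rel_EF k
  | he =>
      simp only [liftF, map_sub, map_mul, FreeAlgebra.lift_ι_apply, AlgHom.commutes, gOp]
      simpa only [cT, map_sub, map_mul, map_one] using rel_HE k
  | hf =>
      simp only [liftF, map_sub, map_mul, map_neg, FreeAlgebra.lift_ι_apply, AlgHom.commutes, gOp]
      simpa only [cT, map_sub, map_mul, map_one] using rel_HF k

def rho : B k →ₐ[LaurentPolynomial k] Module.End (LaurentPolynomial k) (PA k) :=
  RingQuot.liftAlgHom (LaurentPolynomial k) ⟨liftF k, liftF_rel k⟩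

@[simp] lemma rho_e : rho k (Be k) = opE k := by
  rw [Be, rho, RingQuot.liftAlgHom_mkAlgHom_apply, liftF, FreeAlgebra.lift_ι_apply]; rfl
@[simp] lemma rho_f : rho k (Bf k) = opF k := by
  rw [Bf, rho, RingQuot.liftAlgHom_mkAlgHom_apply, liftF, FreeAlgebra.lift_ι_apply]; rfl
@[simp] lemma rho_h : rho k (Bh k) = opH k := by
  rw [Bh, rho, RingQuot.liftAlgHom_mkAlgHom_apply, liftF, FreeAlgebra.lift_ι_apply]; rfl

def sigma : B k →ₗ[LaurentPolynomial k] PA k :=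
  LinearMap.applyₗ (1 : PA k) ∘ₗ (rho k).toLinearMap

lemma sigma_apply (b : B k) : sigma k b = rho k b 1 := rfl

/- === monomials === -/

def Bmu (a b c : ℕ) : B k := Bf k ^ a * (Bh k ^ b * Be k ^ c)

lemma opF_pow (a : ℕ) (q : PA k) :
    (opF k ^ a) q = MvPolynomial.X 0 ^ a * q := by
  induction a generalizing q with
  | zero => simp
  | succ n ih =>
      rw [pow_succ', Module.End.mul_apply, ih, opF_apply, pow_succ']
      ring

lemma Dp_YZ_pow (b c : ℕ) :
    Dp k ((MvPolynomial.X 1 : PA k) ^ b * MvPolynomial.X 2 ^ c) = 0 := by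
  induction b with
  | zero =>
      simp only [pow_zero, one_mul]
      induction c with
      | zero => simp
      | succ n ih => rw [pow_succ', Dp_mul_X2, ih, mul_zero]
  | succ n ih => rw [pow_succ' , mul_assoc, Dp_mul_X1, ih, mul_zero]

lemma opH_pow (b c : ℕ) :
    (opH k ^ b) ((MvPolynomial.X 2 : PA k) ^ c)
      = MvPolynomial.X 1 ^ b * MvPolynomial.X 2 ^ c := by
  induction b with
  | zero => simp
  | succ n ih =>
      rw [pow_succ', Module.End.mul_apply, ih, opH_apply, Dp_YZ_pow, mul_zero, smul_zero,
        sub_zero, pow_succ']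
      ring

lemma opE_pow (c : ℕ) : (opE k ^ c) (1 : PA k) = MvPolynomial.X 2 ^ c := by
  induction c with
  | zero => simp
  | succ n ih =>
      rw [pow_succ', Module.End.mul_apply, ih, opE_apply]
      have h1 : Dp k ((MvPolynomial.X 2 : PA k) ^ n) = 0 := by
        simpa using Dp_YZ_pow k 0 n
      have h2 : phiP k ((MvPolynomial.X 2 : PA k) ^ n) = MvPolynomial.X 2 ^ n := by
        rw [map_pow, phiP_X2]
      rw [h1, h2, map_zero, mul_zero, mul_zero, smul_zero, smul_zero, add_zero, sub_zero,
        pow_succ']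

lemma sigma_Bmu (a b c : ℕ) :
    sigma k (Bmu k a b c)
      = MvPolynomial.X 0 ^ a * (MvPolynomial.X 1 ^ b * MvPolynomial.X 2 ^ c) := by
  rw [sigma_apply, Bmu, map_mul, map_mul, map_pow, map_pow, map_pow, rho_e, rho_f, rho_h]
  rw [Module.End.mul_apply, Module.End.mul_apply, opE_pow, opH_pow, opF_pow]

/- === identities in B === -/

lemma Bid_ef : Be k * Bf k = Bf k * Be k + cT k • Bh k := by
  have h := RingQuot.mkAlgHom_rel (LaurentPolynomial k) (Brel.ef (k := k))
  simp only [map_sub, map_mul, map_one, AlgHom.commutes] at h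
  rw [sub_eq_iff_eq_add'] at h
  rw [Algebra.smul_def]
  simp only [cT, map_sub, map_mul, map_one]
  exact h

lemma Bid_he : Bh k * Be k = Be k * Bh k + (2 * cT k) • Be k := by
  have h := RingQuot.mkAlgHom_rel (LaurentPolynomial k) (Brel.he (k := k))
  simp only [map_sub, map_mul, map_one, AlgHom.commutes] at h
  rw [sub_eq_iff_eq_add'] at h
  rw [Algebra.smul_def]
  simp only [cT, map_sub, map_mul, map_one]
  exact h

lemma Bid_hf : Bh k * Bf k = Bf k * Bh k + (-(2 * cT k)) • Bf k := by
  have h := RingQuot.mkAlgHom_rel (LaurentPolynomial k) (Brel.hf (k := k))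
  simp only [map_sub, map_mul, map_one, map_neg, AlgHom.commutes] at h
  rw [sub_eq_iff_eq_add'] at h
  rw [Algebra.smul_def]
  simp only [cT, map_neg, map_mul, map_sub, map_one]
  exact h

lemma Bid_eh : Be k * Bh k = Bh k * Be k + (-(2 * cT k)) • Be k := by
  rw [Bid_he, add_assoc, ← add_smul]
  simp

lemma hf_pow (a : ℕ) :
    Bh k * Bf k ^ a
      = Bf k ^ a * Bh k + ((-(2 * (a : LaurentPolynomial k))) * cT k) • Bf k ^ a := by
  induction a with
  | zero => simp
  | succ n ih =>
      rw [pow_succ', ← mul_assoc, Bid_hf, add_mul, smul_mul_assoc, mul_assoc, ih, mul_add,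
        mul_smul_comm, ← mul_assoc, ← pow_succ', add_assoc, ← add_smul]
      congr 2
      push_cast
      ring

/- === the span of monomials === -/

def SB : Submodule (LaurentPolynomial k) (B k) :=
  Submodule.span _ (Set.range fun p : ℕ × ℕ × ℕ => Bmu k p.1 p.2.1 p.2.2)

lemma Bmu_mem (a b c : ℕ) : Bmu k a b c ∈ SB k := Submodule.subset_span ⟨(a, b, c), rfl⟩

lemma mulF_Bmu (a b c : ℕ) : Bf k * Bmu k a b c = Bmu k (a + 1) b c := by
  rw [Bmu, Bmu, ← mul_assoc, ← pow_succ']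

lemma mulH_Bmu (a b c : ℕ) :
    Bh k * Bmu k a b c
      = Bmu k a (b + 1) c + ((-(2 * (a : LaurentPolynomial k))) * cT k) • Bmu k a b c := by
  rw [Bmu, ← mul_assoc, hf_pow, add_mul, smul_mul_assoc, mul_assoc, ← mul_assoc (Bh k),
    ← pow_succ']
  rfl

lemma mulF_mem {x : B k} (hx : x ∈ SB k) : Bf k * x ∈ SB k := by
  induction hx using Submodule.span_induction with
  | mem x h => obtain ⟨⟨a, b, c⟩, rfl⟩ := h; rw [mulF_Bmu]; exact Bmu_mem k _ _ _
  | zero => simp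
  | add x y _ _ hx hy => rw [mul_add]; exact add_mem hx hy
  | smul r x _ hx => rw [mul_smul_comm]; exact Submodule.smul_mem _ _ hx

lemma mulH_mem {x : B k} (hx : x ∈ SB k) : Bh k * x ∈ SB k := by
  induction hx using Submodule.span_induction with
  | mem x h =>
      obtain ⟨⟨a, b, c⟩, rfl⟩ := h
      rw [mulH_Bmu]
      exact add_mem (Bmu_mem k _ _ _) (Submodule.smul_mem _ _ (Bmu_mem k _ _ _))
  | zero => simp
  | add x y _ _ hx hy => rw [mul_add]; exact add_mem hx hy
  | smul r x _ hx => rw [mul_smul_comm]; exact Submodule.smul_mem _ _ hx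

lemma mulE_he_pow (b c : ℕ) : Be k * (Bh k ^ b * Be k ^ c) ∈ SB k := by
  induction b generalizing c with
  | zero =>
      have : Be k * (Bh k ^ 0 * Be k ^ c) = Bmu k 0 0 (c + 1) := by
        rw [Bmu]; simp [← pow_succ']
      rw [this]; exact Bmu_mem k _ _ _
  | succ n ih =>
      rw [pow_succ', mul_assoc, ← mul_assoc (Be k), Bid_eh, add_mul, smul_mul_assoc,
        mul_assoc]
      exact add_mem (mulH_mem k (ih c)) (Submodule.smul_mem _ _ (ih c))

lemma mulE_Bmu (a b c : ℕ) : Be k * Bmu k a b c ∈ SB k := by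
  induction a with
  | zero => rw [Bmu, pow_zero, one_mul]; exact mulE_he_pow k b c
  | succ n ih =>
      rw [Bmu, pow_succ', mul_assoc, ← mul_assoc (Be k), Bid_ef, add_mul, smul_mul_assoc,
        mul_assoc]
      exact add_mem (mulF_mem k ih)
        (Submodule.smul_mem _ _ (mulH_mem k (Bmu_mem k n b c)))

lemma mulE_mem {x : B k} (hx : x ∈ SB k) : Be k * x ∈ SB k := by
  induction hx using Submodule.span_induction with
  | mem x h => obtain ⟨⟨a, b, c⟩, rfl⟩ := h; exact mulE_Bmu k a b c
  | zero => simp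
  | add x y _ _ hx hy => rw [mul_add]; exact add_mem hx hy
  | smul r x _ hx => rw [mul_smul_comm]; exact Submodule.smul_mem _ _ hx

lemma SB_top (x : B k) : x ∈ SB k := by
  obtain ⟨y, rfl⟩ := RingQuot.mkAlgHom_surjective (LaurentPolynomial k) (Brel k) x
  have key : ∀ y : FB k, ∀ s ∈ SB k,
      RingQuot.mkAlgHom (LaurentPolynomial k) (Brel k) y * s ∈ SB k := by
    intro y
    induction y using FreeAlgebra.induction with
    | grade0 r =>
        intro s hs
        rw [AlgHom.commutes, ← Algebra.smul_def]
        exact Submodule.smul_mem _ _ hs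
    | grade1 g =>
        intro s hs
        cases g with
        | e => exact mulE_mem k hs
        | f => exact mulF_mem k hs
        | h => exact mulH_mem k hs
    | mul x y hx hy => intro s hs; rw [map_mul, mul_assoc]; exact hx _ (hy _ hs)
    | add x y hx hy =>
        intro s hs; rw [map_add, add_mul]; exact add_mem (hx _ hs) (hy _ hs)
  have h1 : (1 : B k) ∈ SB k := by
    have : Bmu k 0 0 0 = 1 := by simp [Bmu]
    rw [← this]; exact Bmu_mem k 0 0 0
  simpa using key y 1 h1

/- === the retraction === -/

def piB : PA k →ₗ[LaurentPolynomial k] B k :=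
  (MvPolynomial.basisMonomials (Fin 3) (LaurentPolynomial k)).constr ℕ
    fun d => Bmu k (d 0) (d 1) (d 2)

lemma piB_monomial (d : Fin 3 →₀ ℕ) :
    piB k (MvPolynomial.monomial d 1) = Bmu k (d 0) (d 1) (d 2) := by
  have := Module.Basis.constr_basis (MvPolynomial.basisMonomials (Fin 3) (LaurentPolynomial k)) ℕ
    (fun d => Bmu k (d 0) (d 1) (d 2)) d
  rwa [MvPolynomial.coe_basisMonomials] at this

lemma piB_sigma_Bmu (a b c : ℕ) : piB k (sigma k (Bmu k a b c)) = Bmu k a b c := by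
  rw [sigma_Bmu]
  have hmono : (MvPolynomial.X 0 : PA k) ^ a * (MvPolynomial.X 1 ^ b * MvPolynomial.X 2 ^ c)
      = MvPolynomial.monomial
          (Finsupp.single 0 a + (Finsupp.single 1 b + Finsupp.single 2 c)) 1 := by
    simp [MvPolynomial.X_pow_eq_monomial, MvPolynomial.monomial_mul]
  rw [hmono, piB_monomial]
  congr 1 <;> simp [Finsupp.single_apply]

lemma piB_sigma (x : B k) : piB k (sigma k x) = x := by
  induction SB_top k x using Submodule.span_induction with
  | mem x h => obtain ⟨⟨a, b, c⟩, rfl⟩ := h; exact piB_sigma_Bmu k a b c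
  | zero => simp
  | add x y _ _ hx hy => rw [map_add, map_add, hx, hy]
  | smul r x _ hx => rw [map_smul, map_smul, hx]

lemma T_sub_one_ne_zero : (T 1 - 1 : LaurentPolynomial k) ≠ 0 := by
  intro h
  rw [sub_eq_zero] at h
  have h3 : (T 1 : LaurentPolynomial k) = T 0 := h.trans (T_zero (R := k)).symm
  have h2 : ((T 1 : LaurentPolynomial k)).coeff 1 = ((T 0 : LaurentPolynomial k)).coeff 1 := by rw [h3]
  rw [T_apply, T_apply] at h2
  simp at h2

theorem final : ∀ b : B k, (Bt k - 1) * b = 0 → b = 0 := by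
  intro b hb
  have ht : Bt k - 1 = algebraMap (LaurentPolynomial k) (B k) (T 1 - 1) := by
    rw [map_sub, map_one, Bt]
  rw [ht, ← Algebra.smul_def] at hb
  have h0 : (T 1 - 1 : LaurentPolynomial k) • sigma k b = 0 := by
    rw [← map_smul, hb, map_zero]
  rw [MvPolynomial.smul_eq_C_mul] at h0
  rcases mul_eq_zero.mp h0 with h1 | h1
  · exact absurd (MvPolynomial.C_eq_zero.mp h1) (T_sub_one_ne_zero k)
  · rw [← piB_sigma k b, h1, map_zero]


/-- the central element `t − 1` of `B` is a non-zero-divisor. -/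
theorem t_sub_one_nonZeroDivisor :
    ∀ b : B k, (Bt k - 1) * b = 0 → b = 0 := by
  exact final k
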